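/- arXiv:1706.01870 — 8 statements merged into one kernel-verified Lean document; each statement's English description precedes it below -/
import Mathlib

section
/- Let $V$ be a vector space over a field $K$, let $v_1,\dots,v_r \in V$, and let $a_1,\dots,a_r \in K$ all be nonzero. If $\sum_{i=1}^r a_i\,(v_i \otimes v_i) = 0$ in $V \otimes_K V$, then the linear span of $\{v_1,\dots,v_r\}$ has dimension at most $\lfloor r/2 \rfloor$. -/
open TensorProduct

/-- Igusa's lemma: if `∑ aᵢ • (vᵢ ⊗ vᵢ) = 0` with all `aᵢ ≠ 0`, then the span of the `vᵢ`
has dimension at most `⌊r/2⌋`. -/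
theorem igusa_lemma {K V : Type*} [Field K] [AddCommGroup V] [Module K V]
    (r : ℕ) (v : Fin r → V) (a : Fin r → K) (ha : ∀ i, a i ≠ 0)
    (h : ∑ i, a i • (v i ⊗ₜ[K] v i) = (0 : V ⊗[K] V)) :
    Module.finrank K ↥(Submodule.span K (Set.range v)) ≤ r / 2 := by
  classical
  obtain ⟨I, hIli : LinearIndependent K (fun x : I => v x), hImax⟩ := exists_maximal_linearIndepOn K v
  haveI : Fintype I := (Set.toFinite I).fintype
  set t : Finset (Fin r) := I.toFinset with ht
  -- every `v i` lies in the span of `v '' I`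
  have hmemI : ∀ i, v i ∈ Submodule.span K (v '' I) := by
    intro i
    by_cases hi : i ∈ I
    · exact Submodule.subset_span ⟨i, hi, rfl⟩
    · obtain ⟨c, hc0, hc⟩ := hImax i hi
      have hvi : v i = c⁻¹ • (c • v i) := by
        rw [smul_smul, inv_mul_cancel₀ hc0, one_smul]
      rw [hvi]
      exact Submodule.smul_mem _ _ hc
  have hspan : Submodule.span K (Set.range v) = Submodule.span K (v '' I) := by
    refine le_antisymm ?_ (Submodule.span_mono (Set.image_subset_range _ _))
    rw [Submodule.span_le]
    rintro _ ⟨i, rfl⟩; exact hmemI i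
  -- the set `v '' I` is linearly independent
  have hs : LinearIndepOn K id (v '' I) := by
    rw [show v '' I = Set.range (fun x : I => v x) from (Set.image_eq_range _ _)]
    exact hIli.linearIndepOn_id
  -- key step: each `v j` with `j ∈ I` lies in the span of the other vectors
  have key : ∀ j ∈ I, v j ∈ Submodule.span K (v '' Iᶜ) := by
    intro j hj
    have hsub : v '' I ⊆ hs.extend (Set.subset_univ _) := hs.subset_extend _
    set jx : hs.extend (Set.subset_univ _) := ⟨v j, hsub ⟨j, hj, rfl⟩⟩ with hjx
    set f : V →ₗ[K] K := (Module.Basis.extend hs).coord jx with hf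
    have hfj : f (v j) = 1 := by
      have hvj : v j = Module.Basis.extend hs jx := (Module.Basis.extend_apply_self hs jx).symm
      rw [hf, hvj, Module.Basis.coord_apply, Module.Basis.repr_self, Finsupp.single_eq_same]
    have hfi : ∀ i ∈ I, i ≠ j → f (v i) = 0 := by
      intro i hi hij
      have hix : v i = Module.Basis.extend hs ⟨v i, hsub ⟨i, hi, rfl⟩⟩ :=
        (Module.Basis.extend_apply_self hs ⟨v i, hsub ⟨i, hi, rfl⟩⟩).symm
      have hne : (⟨v i, hsub ⟨i, hi, rfl⟩⟩ : hs.extend (Set.subset_univ _)) ≠ jx := by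
        intro hcontr
        apply hij
        have hvij : v i = v j := congrArg Subtype.val hcontr
        have := hIli.injective (a₁ := ⟨i, hi⟩) (a₂ := ⟨j, hj⟩) hvij
        exact congrArg Subtype.val this
      rw [hf, hix, Module.Basis.coord_apply, Module.Basis.repr_self, Finsupp.single_eq_of_ne' hne]
    -- apply `f ⊗ id` to the relation
    set g : V ⊗[K] V →ₗ[K] V :=
      (TensorProduct.lid K V).toLinearMap.comp (LinearMap.rTensor V f) with hg
    have hgt : ∀ x y : V, g (x ⊗ₜ[K] y) = f x • y := by
      intro x y; simp [hg]
    have h0 : ∑ i, a i • (f (v i) • v i) = 0 := by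
      have hc := congrArg g h
      rw [map_sum, map_zero] at hc
      simpa only [map_smul, hgt] using hc
    -- split the sum over `t` and `tᶜ`
    rw [← Finset.sum_add_sum_compl t] at h0
    have hsum_t : ∑ i ∈ t, a i • (f (v i) • v i) = a j • v j := by
      rw [Finset.sum_eq_single j]
      · rw [hfj, one_smul]
      · intro i hit hij
        rw [hfi i (by simpa [ht] using hit) hij, zero_smul, smul_zero]
      · intro hjt; exact absurd (by simpa [ht] using hj) hjt
    rw [hsum_t] at h0
    have hvj : v j = (-(a j)⁻¹) • ∑ i ∈ tᶜ, a i • (f (v i) • v i) := by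
      have : a j • v j = -∑ i ∈ tᶜ, a i • (f (v i) • v i) := by
        rw [eq_neg_iff_add_eq_zero]; exact h0
      rw [neg_smul, ← smul_neg, ← this, smul_smul, inv_mul_cancel₀ (ha j), one_smul]
    rw [hvj]
    refine Submodule.smul_mem _ _ (Submodule.sum_mem _ ?_)
    intro i hit
    refine Submodule.smul_mem _ _ (Submodule.smul_mem _ _ (Submodule.subset_span ?_))
    exact ⟨i, by simpa [ht] using (Finset.mem_compl.mp hit), rfl⟩
  -- hence the whole span is inside `span (v '' Iᶜ)`
  have hspan2 : Submodule.span K (Set.range v) ≤ Submodule.span K (v '' Iᶜ) := by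
    rw [Submodule.span_le]
    rintro _ ⟨i, rfl⟩
    by_cases hi : i ∈ I
    · exact key i hi
    · exact Submodule.subset_span ⟨i, hi, rfl⟩
  -- count dimensions
  have hcard : Module.finrank K ↥(Submodule.span K (Set.range v)) = t.card := by
    rw [hspan, show v '' I = Set.range (fun x : I => v x) from (Set.image_eq_range _ _),
      finrank_span_eq_card hIli]
    simp [ht, Set.toFinset_card]
  have himg : v '' Iᶜ = ((tᶜ).image v : Finset V) := by
    ext x
    simp [ht, Set.mem_image]
  have hle : Module.finrank K ↥(Submodule.span K (Set.range v)) ≤ (tᶜ).card := by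
    calc Module.finrank K ↥(Submodule.span K (Set.range v))
        ≤ Module.finrank K ↥(Submodule.span K ((((tᶜ).image v : Finset V)) : Set V)) := by
          refine Submodule.finrank_mono ?_
          rwa [himg] at hspan2
      _ ≤ ((tᶜ).image v).card := finrank_span_finset_le_card _
      _ ≤ (tᶜ).card := Finset.card_image_le
  have hcompl : (tᶜ).card = r - t.card := by
    rw [Finset.card_compl]; simp
  rw [hcard] at hle ⊢
  rw [hcompl] at hle
  rw [Nat.le_div_iff_mul_le (by norm_num)]
  omega
end

section
/- Let $V$ be a vector space over a field $K$, let $w, v_2, \dots, v_r \in V$, and let $\beta_2,\dots,\beta_r \in K$ all be nonzero. If $w \otimes w = \sum_{k=2}^{r} \beta_k\,(v_k \otimes v_k)$ in $V \otimes_K V$, then the linear span of $\{w, v_2, \dots, v_r\}$ has dimension at most $\lfloor r/2 \rfloor$. -/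
open TensorProduct Module Submodule

lemma aux_rank_bound {K V : Type*} [Field K] [AddCommGroup V] [Module K V]
    (t : Finset ℕ) (x : ℕ → V) (c : ℕ → K) (hc : ∀ k ∈ t, c k ≠ 0)
    (hrel : ∀ f : Module.Dual K V, ∑ k ∈ t, (c k * f (x k)) • x k = 0) :
    2 * Module.finrank K ↥(Submodule.span K (x '' ↑t)) ≤ t.card := by
  set W := Submodule.span K (x '' ↑t) with hW
  haveI : FiniteDimensional K W :=
    FiniteDimensional.span_of_finite K (t.finite_toSet.image x)
  set x' : {k // k ∈ t} → W := fun k => ⟨x k, subset_span ⟨k, k.2, rfl⟩⟩ with hx'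
  have hsub : ∀ k : {k // k ∈ t}, W.subtype (x' k) = x k := fun k => rfl
  have hspan : Submodule.span K (Set.range x') = ⊤ := by
    apply Submodule.map_injective_of_injective W.injective_subtype
    rw [Submodule.map_span, Submodule.map_top, Submodule.range_subtype]
    have : W.subtype '' Set.range x' = x '' ↑t := by
      ext y
      constructor
      · rintro ⟨z, ⟨k, rfl⟩, rfl⟩; exact ⟨k, k.2, rfl⟩
      · rintro ⟨k, hk, rfl⟩; exact ⟨x' ⟨k, hk⟩, ⟨⟨k, hk⟩, rfl⟩, rfl⟩
    rw [this, hW]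
  set A : ({k // k ∈ t} → K) →ₗ[K] W := Fintype.linearCombination K x' with hA
  have hAsurj : LinearMap.range A = ⊤ := by
    rw [hA, Fintype.range_linearCombination, hspan]
  set B : Module.Dual K W →ₗ[K] ({k // k ∈ t} → K) :=
    { toFun := fun g k => c k * g (x' k)
      map_add' := by intro g₁ g₂; funext k; simp [mul_add]
      map_smul' := by intro a g; funext k; simp [smul_eq_mul]; ring } with hB
  have hBinj : Function.Injective B := by
    rw [← LinearMap.ker_eq_bot, eq_bot_iff]
    intro g hg
    simp only [LinearMap.mem_ker] at hg
    have hg' : ∀ k : {k // k ∈ t}, g (x' k) = 0 := by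
      intro k
      have := congrFun hg k
      simp only [hB, LinearMap.coe_mk, AddHom.coe_mk, Pi.zero_apply] at this
      exact (mul_eq_zero.mp this).resolve_left (hc k k.2)
    have : g = 0 := by
      apply LinearMap.ext_on_range hspan
      intro k; simp [hg' k]
    simp [this]
  have hcomp : ∀ g : Module.Dual K W, A (B g) = 0 := by
    intro g
    obtain ⟨f, hf⟩ := LinearMap.exists_extend (V' := K) g
    apply W.injective_subtype
    rw [map_zero]
    have : W.subtype (A (B g)) = ∑ k ∈ t, (c k * f (x k)) • x k := by
      rw [hA, Fintype.linearCombination_apply, map_sum]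
      rw [← Finset.sum_coe_sort t (fun k => (c k * f (x k)) • x k)]
      apply Finset.sum_congr rfl
      intro k _
      have hfx : f (x k) = g (x' k) := by
        rw [← hsub k, ← LinearMap.comp_apply, hf]
      simp [hB, map_smul, hfx, hsub]
    rw [this, hrel f]
  have hle : LinearMap.range B ≤ LinearMap.ker A := by
    rintro y ⟨g, rfl⟩
    exact hcomp g
  have h1 : finrank K (LinearMap.range B) = finrank K W := by
    rw [LinearMap.finrank_range_of_inj hBinj, Subspace.dual_finrank_eq]
  have h2 : finrank K (LinearMap.range A) + finrank K (LinearMap.ker A) =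
      t.card := by
    rw [LinearMap.finrank_range_add_finrank_ker A]
    simp [Module.finrank_pi]
  have h3 : finrank K (LinearMap.range A) = finrank K W := by
    rw [hAsurj, finrank_top]
  have h4 : finrank K (LinearMap.range B) ≤ finrank K (LinearMap.ker A) :=
    Submodule.finrank_mono hle
  omega

/-- Rank-one decomposition step: if `w ⊗ w = ∑_{k=2}^r βₖ • (vₖ ⊗ vₖ)` with all `βₖ ≠ 0`,
then the span of `{w, v₂, …, v_r}` has dimension at most `⌊r/2⌋`. -/
theorem span_le_of_tensor_sq_eq_sum {K V : Type*} [Field K] [AddCommGroup V] [Module K V]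
    (r : ℕ) (w : V) (v : ℕ → V) (β : ℕ → K)
    (hβ : ∀ k ∈ Finset.Icc 2 r, β k ≠ 0)
    (h : w ⊗ₜ[K] w = ∑ k ∈ Finset.Icc 2 r, β k • (v k ⊗ₜ[K] v k)) :
    Module.finrank K ↥(Submodule.span K (insert w (v '' ↑(Finset.Icc 2 r)))) ≤ r / 2 := by
  classical
  set t : Finset ℕ := insert 1 (Finset.Icc 2 r) with ht
  have h1 : (1 : ℕ) ∉ Finset.Icc 2 r := by simp
  set x : ℕ → V := fun k => if k = 1 then w else v k with hx
  set c : ℕ → K := fun k => if k = 1 then -1 else β k with hc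
  have hcne : ∀ k ∈ t, c k ≠ 0 := by
    intro k hk
    rcases Finset.mem_insert.mp hk with rfl | hk
    · simp [hc]
    · have : k ≠ 1 := by
        have := (Finset.mem_Icc.mp hk).1; omega
      simp only [hc, if_neg this]
      exact hβ k hk
  have hxv : ∀ k, 2 ≤ k → x k = v k := by
    intro k hk
    simp [hx, show k ≠ 1 by omega]
  have himg : x '' ↑t = insert w (v '' ↑(Finset.Icc 2 r)) := by
    rw [ht, Finset.coe_insert, Set.image_insert_eq, show x 1 = w from by simp [hx]]
    congr 1
    refine Set.image_congr fun k hk => hxv k ?_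
    rw [Finset.mem_coe, Finset.mem_Icc] at hk
    exact hk.1
  have hrel : ∀ f : Module.Dual K V, ∑ k ∈ t, (c k * f (x k)) • x k = 0 := by
    intro f
    have key : ∑ k ∈ t, c k • (x k ⊗ₜ[K] x k) = 0 := by
      rw [ht, Finset.sum_insert h1]
      have : ∑ k ∈ Finset.Icc 2 r, c k • (x k ⊗ₜ[K] x k)
          = ∑ k ∈ Finset.Icc 2 r, β k • (v k ⊗ₜ[K] v k) := by
        apply Finset.sum_congr rfl
        intro k hk
        have hk1 : k ≠ 1 := by
          have := (Finset.mem_Icc.mp hk).1; omega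
        simp [hx, hc, hk1]
      rw [this, ← h]
      simp [hx, hc]
    set L : V ⊗[K] V →ₗ[K] V := TensorProduct.lift ((LinearMap.lsmul K V).comp f) with hL
    have := congrArg L key
    rw [map_sum, map_zero] at this
    rw [← this]
    apply Finset.sum_congr rfl
    intro k _
    rw [map_smul]
    simp [hL, TensorProduct.lift.tmul, smul_smul]
  have hmain := aux_rank_bound t x c hcne hrel
  rw [himg] at hmain
  have hcard : t.card = (Finset.Icc 2 r).card + 1 := by
    rw [ht, Finset.card_insert_of_notMem h1]
  rw [Nat.card_Icc] at hcard
  omega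
end

section
/- Let $V$ be a vector space over a field $K$, let $v_1, v_2, v_3 \in V$, and let $\beta_2, \beta_3 \in K$ be nonzero. If $v_1 \otimes v_1 = \beta_2\,(v_2 \otimes v_2) + \beta_3\,(v_3 \otimes v_3)$ in $V \otimes_K V$, then the span of $\{v_1, v_2, v_3\}$ has dimension at most $1$; in particular the three vectors are pairwise linearly dependent. -/
open TensorProduct

private lemma exists_dual_pair {K V : Type*} [Field K] [AddCommGroup V] [Module K V]
    {x y : V} (h : LinearIndependent K ![x, y]) :
    ∃ f : V →ₗ[K] K, f x = 1 ∧ f y = 0 := by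
  classical
  have hxy : x ≠ y := by
    intro e
    have := (LinearIndependent.pair_iff.mp h) 1 (-1) (by rw [e]; module)
    exact one_ne_zero this.1
  have hrange : Set.range ![x, y] = {x, y} := by
    ext z; simp [Fin.exists_fin_two, or_comm]
  have hs : LinearIndepOn K id ({x, y} : Set V) := by
    have := (linearIndepOn_id_range_iff h.injective).mpr h; rwa [hrange] at this
  have hx : x ∈ hs.extend (Set.subset_univ _) :=
    hs.subset_extend _ (by simp)
  have hy : y ∈ hs.extend (Set.subset_univ _) :=
    hs.subset_extend _ (by simp)
  refine ⟨(Module.Basis.extend hs).coord ⟨x, hx⟩, ?_, ?_⟩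
  · have e1 : (Module.Basis.extend hs).coord ⟨x, hx⟩ ((Module.Basis.extend hs) ⟨x, hx⟩) = 1 := by
      rw [Module.Basis.coord_apply, Module.Basis.repr_self_apply]; simp
    rwa [Module.Basis.extend_apply_self] at e1
  · have e2 : (Module.Basis.extend hs).coord ⟨x, hx⟩ ((Module.Basis.extend hs) ⟨y, hy⟩) = 0 := by
      rw [Module.Basis.coord_apply, Module.Basis.repr_self_apply]
      simp [Subtype.ext_iff, hxy.symm]
    rwa [Module.Basis.extend_apply_self] at e2

private lemma exists_dual_single {K V : Type*} [Field K] [AddCommGroup V] [Module K V]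
    {x : V} (h : x ≠ 0) : ∃ f : V →ₗ[K] K, f x = 1 := by
  classical
  have hs : LinearIndepOn K id ({x} : Set V) := (linearIndepOn_singleton_iff K).mpr h
  have hx : x ∈ hs.extend (Set.subset_univ _) := hs.subset_extend _ (by simp)
  refine ⟨(Module.Basis.extend hs).coord ⟨x, hx⟩, ?_⟩
  have e1 : (Module.Basis.extend hs).coord ⟨x, hx⟩ ((Module.Basis.extend hs) ⟨x, hx⟩) = 1 := by
    rw [Module.Basis.coord_apply, Module.Basis.repr_self_apply]; simp
  rwa [Module.Basis.extend_apply_self] at e1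

/-- Apply a functional to the first tensor factor. -/
private noncomputable def contr {K V : Type*} [Field K] [AddCommGroup V] [Module K V]
    (f : V →ₗ[K] K) : V ⊗[K] V →ₗ[K] V :=
  TensorProduct.lift ((LinearMap.lsmul K V).comp f)

private lemma contr_tmul {K V : Type*} [Field K] [AddCommGroup V] [Module K V]
    (f : V →ₗ[K] K) (a b : V) : contr f (a ⊗ₜ[K] b) = f a • b := rfl

private lemma mem_span_of_tensor_eq {K V : Type*} [Field K] [AddCommGroup V] [Module K V]
    {v w : V} {γ : K} (h : v ⊗ₜ[K] v = γ • (w ⊗ₜ[K] w)) :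
    v ∈ Submodule.span K ({w} : Set V) := by
  by_contra hv
  have hv0 : v ≠ 0 := fun e => hv (e ▸ Submodule.zero_mem _)
  by_cases hw0 : w = 0
  · subst hw0
    obtain ⟨f, hf⟩ := exists_dual_single (K := K) hv0
    have hc := congrArg (contr f) h
    simp only [contr_tmul, map_smul, hf, one_smul, smul_zero] at hc
    exact hv0 hc
  · have hli : LinearIndependent K ![v, w] := by
      rw [LinearIndependent.pair_iff]
      intro s t hst
      rcases eq_or_ne s 0 with hs | hs
      · subst hs
        simp only [zero_smul, zero_add] at hst
        exact ⟨rfl, by rcases smul_eq_zero.mp hst with h' | h' <;>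
          [exact h'; exact absurd h' hw0]⟩
      · exfalso
        apply hv
        have h2 : (s⁻¹ * s) • v + (s⁻¹ * t) • w = 0 := by
          rw [mul_smul, mul_smul, ← smul_add, hst, smul_zero]
        rw [inv_mul_cancel₀ hs, one_smul] at h2
        have hv' : v = (-(s⁻¹ * t)) • w := by
          linear_combination (norm := module) h2
        rw [hv']
        exact Submodule.smul_mem _ _ (Submodule.mem_span_singleton_self w)
    obtain ⟨f, hf1, hf2⟩ := exists_dual_pair hli
    have hc := congrArg (contr f) h
    simp only [contr_tmul, map_smul, hf1, hf2, one_smul, zero_smul, smul_zero] at hc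
    exact hv0 hc

/-- Trisecant case of the rank-one decomposition lemma: if
`v₁ ⊗ v₁ = β₂ • (v₂ ⊗ v₂) + β₃ • (v₃ ⊗ v₃)` with `β₂, β₃ ≠ 0`, then the span of
`{v₁, v₂, v₃}` has dimension at most `1`, and the three vectors are pairwise
linearly dependent. -/
theorem span_le_one_of_tensor_trisecant {K V : Type*} [Field K] [AddCommGroup V] [Module K V]
    (v₁ v₂ v₃ : V) (β₂ β₃ : K) (hβ₂ : β₂ ≠ 0) (hβ₃ : β₃ ≠ 0)
    (h : v₁ ⊗ₜ[K] v₁ = β₂ • (v₂ ⊗ₜ[K] v₂) + β₃ • (v₃ ⊗ₜ[K] v₃)) :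
    Module.finrank K ↥(Submodule.span K ({v₁, v₂, v₃} : Set V)) ≤ 1 ∧
      ∀ x ∈ ({v₁, v₂, v₃} : Set V), ∀ y ∈ ({v₁, v₂, v₃} : Set V),
        ¬ LinearIndependent K ![x, y] := by
  -- Step 1: v₂ and v₃ are linearly dependent.
  have hdep23 : ¬ LinearIndependent K ![v₂, v₃] := by
    intro hli
    have hli' : LinearIndependent K ![v₃, v₂] := by
      rw [LinearIndependent.pair_iff] at hli ⊢
      intro s t hst
      have := hli t s (by linear_combination (norm := module) hst)
      exact ⟨this.2, this.1⟩
    obtain ⟨f, hf1, hf2⟩ := exists_dual_pair hli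
    obtain ⟨g, hg1, hg2⟩ := exists_dual_pair hli'
    have hf' := congrArg (contr f) h
    have hg' := congrArg (contr g) h
    simp only [map_add, map_smul, contr_tmul, hf1, hf2, hg1, hg2, one_smul, zero_smul,
      smul_zero, add_zero, zero_add] at hf' hg'
    -- hf' : f v₁ • v₁ = β₂ • v₂, hg' : g v₁ • v₁ = β₃ • v₃
    have key : (g v₁ * β₂) • v₂ + (-(f v₁ * β₃)) • v₃ = 0 := by
      have h3 : g v₁ • f v₁ • v₁ = f v₁ • g v₁ • v₁ := by
        rw [smul_smul, smul_smul, mul_comm]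
      rw [hf', hg'] at h3
      linear_combination (norm := module) h3
    have hkey := (LinearIndependent.pair_iff.mp hli) _ _ key
    have hg0 : g v₁ = 0 := (mul_eq_zero.mp hkey.1).resolve_right hβ₂
    have h4 : β₃ • v₃ = 0 := by rw [← hg', hg0, zero_smul]
    have hv3 : v₃ = 0 := by
      rcases smul_eq_zero.mp h4 with h' | h'
      · exact absurd h' hβ₃
      · exact h'
    have := (LinearIndependent.pair_iff.mp hli) 0 1 (by simp [hv3])
    exact one_ne_zero this.2
  -- Step 2: find a single vector spanning everything.
  have hA : ∃ w : V, v₁ ∈ Submodule.span K ({w} : Set V) ∧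
      v₂ ∈ Submodule.span K ({w} : Set V) ∧ v₃ ∈ Submodule.span K ({w} : Set V) := by
    rw [LinearIndependent.pair_iff] at hdep23
    push_neg at hdep23
    obtain ⟨s, t, hst, hne⟩ := hdep23
    by_cases ht : t = 0
    · -- s ≠ 0, so v₂ = c • v₃
      have hs : s ≠ 0 := fun h' => hne h' ht
      have h2 : (s⁻¹ * s) • v₂ + (s⁻¹ * t) • v₃ = 0 := by
        rw [mul_smul, mul_smul, ← smul_add, hst, smul_zero]
      rw [inv_mul_cancel₀ hs, one_smul] at h2
      obtain ⟨c, hv2⟩ : ∃ c : K, v₂ = c • v₃ :=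
        ⟨-(s⁻¹ * t), by linear_combination (norm := module) h2⟩
      have hcc : (c • v₃) ⊗ₜ[K] (c • v₃) = (c * c) • (v₃ ⊗ₜ[K] v₃) := by
        simp [TensorProduct.smul_tmul', TensorProduct.tmul_smul, smul_smul]
      have htensor : v₁ ⊗ₜ[K] v₁ = (β₂ * (c * c) + β₃) • (v₃ ⊗ₜ[K] v₃) := by
        rw [h, hv2, hcc]; module
      refine ⟨v₃, mem_span_of_tensor_eq htensor, ?_, Submodule.mem_span_singleton_self v₃⟩
      rw [hv2]
      exact Submodule.smul_mem _ _ (Submodule.mem_span_singleton_self v₃)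
    · -- t ≠ 0, so v₃ = c • v₂
      have h2 : (t⁻¹ * s) • v₂ + (t⁻¹ * t) • v₃ = 0 := by
        rw [mul_smul, mul_smul, ← smul_add, hst, smul_zero]
      rw [inv_mul_cancel₀ ht, one_smul] at h2
      obtain ⟨c, hv3⟩ : ∃ c : K, v₃ = c • v₂ :=
        ⟨-(t⁻¹ * s), by linear_combination (norm := module) h2⟩
      have hcc : (c • v₂) ⊗ₜ[K] (c • v₂) = (c * c) • (v₂ ⊗ₜ[K] v₂) := by
        simp [TensorProduct.smul_tmul', TensorProduct.tmul_smul, smul_smul]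
      have htensor : v₁ ⊗ₜ[K] v₁ = (β₂ + β₃ * (c * c)) • (v₂ ⊗ₜ[K] v₂) := by
        rw [h, hv3, hcc]; module
      refine ⟨v₂, mem_span_of_tensor_eq htensor, Submodule.mem_span_singleton_self v₂, ?_⟩
      rw [hv3]
      exact Submodule.smul_mem _ _ (Submodule.mem_span_singleton_self v₂)
  obtain ⟨w, h1, h2, h3⟩ := hA
  have hsub : Submodule.span K ({v₁, v₂, v₃} : Set V) ≤ Submodule.span K ({w} : Set V) := by
    rw [Submodule.span_le]
    rintro x (rfl | rfl | rfl) <;> assumption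
  constructor
  · calc Module.finrank K ↥(Submodule.span K ({v₁, v₂, v₃} : Set V))
        ≤ Module.finrank K ↥(Submodule.span K ({w} : Set V)) := Submodule.finrank_mono hsub
      _ ≤ 1 := by
          rcases eq_or_ne w 0 with rfl | hw
          · rw [Submodule.span_zero_singleton]
            simp
          · rw [finrank_span_singleton hw]
  · intro x hx y hy hli
    have hxw : x ∈ Submodule.span K ({w} : Set V) := hsub (Submodule.subset_span hx)
    have hyw : y ∈ Submodule.span K ({w} : Set V) := hsub (Submodule.subset_span hy)
    obtain ⟨a, rfl⟩ := Submodule.mem_span_singleton.mp hxw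
    obtain ⟨b, rfl⟩ := Submodule.mem_span_singleton.mp hyw
    have key : b • (a • w) + (-a) • (b • w) = 0 := by module
    have hab := (LinearIndependent.pair_iff.mp hli) b (-a) key
    have ha : a = 0 := by have := hab.2; simpa using this
    have := (LinearIndependent.pair_iff.mp hli) 1 0 (by simp [ha])
    exact one_ne_zero this.1
end

section
/- Let $V$ be a vector space over a field $K$, let $v_1, v_2, v_3, v_4 \in V$, and let $\beta_2, \beta_3, \beta_4 \in K$ be nonzero. If $v_1 \otimes v_1 = \beta_2\,(v_2 \otimes v_2) + \beta_3\,(v_3 \otimes v_3) + \beta_4\,(v_4 \otimes v_4)$ in $V \otimes_K V$, then the span of $\{v_1, v_2, v_3, v_4\}$ has dimension at most $2$. -/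
open TensorProduct

private lemma tensor_contract {K V : Type*} [Field K] [AddCommGroup V] [Module K V]
    {v₁ v₂ v₃ v₄ : V} {β₂ β₃ β₄ : K}
    (h : v₁ ⊗ₜ[K] v₁ =
        β₂ • (v₂ ⊗ₜ[K] v₂) + β₃ • (v₃ ⊗ₜ[K] v₃) + β₄ • (v₄ ⊗ₜ[K] v₄))
    (f g : V →ₗ[K] K) :
    f v₁ * g v₁ = β₂ * (f v₂ * g v₂) + β₃ * (f v₃ * g v₃) + β₄ * (f v₄ * g v₄) := by
  have := congrArg ((TensorProduct.lid K K).toLinearMap ∘ₗ TensorProduct.map f g) h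
  simpa [smul_eq_mul, mul_comm, mul_left_comm, mul_assoc] using this

/-- Quadrisecant case of the rank-one decomposition lemma: if
`v₁ ⊗ v₁ = β₂ • (v₂ ⊗ v₂) + β₃ • (v₃ ⊗ v₃) + β₄ • (v₄ ⊗ v₄)` with `β₂, β₃, β₄ ≠ 0`,
then the span of `{v₁, v₂, v₃, v₄}` has dimension at most `2`. -/
theorem span_le_two_of_tensor_quadrisecant {K V : Type*} [Field K] [AddCommGroup V] [Module K V]
    (v₁ v₂ v₃ v₄ : V) (β₂ β₃ β₄ : K) (hβ₂ : β₂ ≠ 0) (hβ₃ : β₃ ≠ 0) (hβ₄ : β₄ ≠ 0)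
    (h : v₁ ⊗ₜ[K] v₁ =
        β₂ • (v₂ ⊗ₜ[K] v₂) + β₃ • (v₃ ⊗ₜ[K] v₃) + β₄ • (v₄ ⊗ₜ[K] v₄)) :
    Module.finrank K ↥(Submodule.span K ({v₁, v₂, v₃, v₄} : Set V)) ≤ 2 := by
  -- Step A : v₂, v₃, v₄ are linearly dependent
  have hdep : ¬ LinearIndependent K ![v₂, v₃, v₄] := by
    intro hli
    have hinj := hli.injective
    have h23 : v₂ ≠ v₃ := fun e => by
      have := hinj (a₁ := 0) (a₂ := 1) (by simpa using e)
      simp at this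
    have h24 : v₂ ≠ v₄ := fun e => by
      have := hinj (a₁ := 0) (a₂ := 2) (by simpa using e)
      simp at this
    have h34 : v₃ ≠ v₄ := fun e => by
      have := hinj (a₁ := 1) (a₂ := 2) (by simpa using e)
      simp at this
    have hs : LinearIndepOn K id (Set.range ![v₂, v₃, v₄]) :=
      (linearIndepOn_id_range_iff hli.injective).mpr hli
    let b := Module.Basis.extend hs
    have m2 : v₂ ∈ hs.extend (Set.subset_univ _) := hs.subset_extend _ ⟨0, by simp⟩
    have m3 : v₃ ∈ hs.extend (Set.subset_univ _) := hs.subset_extend _ ⟨1, by simp⟩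
    have m4 : v₄ ∈ hs.extend (Set.subset_univ _) := hs.subset_extend _ ⟨2, by simp⟩
    have hb : ∀ x (hx : x ∈ hs.extend (Set.subset_univ _)), b ⟨x, hx⟩ = x := fun x hx =>
      Module.Basis.extend_apply_self hs ⟨x, hx⟩
    classical
    have key : ∀ (x y : V) (hx : x ∈ hs.extend (Set.subset_univ _))
        (hy : y ∈ hs.extend (Set.subset_univ _)),
        b.coord ⟨x, hx⟩ y = if y = x then 1 else 0 := by
      intro x y hx hy
      conv_lhs => rw [← hb y hy]
      simp [Module.Basis.coord_apply, Module.Basis.repr_self, Finsupp.single_apply, Subtype.ext_iff]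
    have e22 := tensor_contract h (b.coord ⟨v₂, m2⟩) (b.coord ⟨v₂, m2⟩)
    have e33 := tensor_contract h (b.coord ⟨v₃, m3⟩) (b.coord ⟨v₃, m3⟩)
    have e23 := tensor_contract h (b.coord ⟨v₂, m2⟩) (b.coord ⟨v₃, m3⟩)
    rw [key v₂ v₂ m2 m2, key v₂ v₃ m2 m3, key v₂ v₄ m2 m4] at e22 e23
    rw [key v₃ v₂ m3 m2, key v₃ v₃ m3 m3, key v₃ v₄ m3 m4] at e33 e23
    simp [h23, h23.symm, h24.symm, h34.symm] at e22 e33 e23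
    rcases e23 with e | e
    · exact hβ₂ (by rw [← e22, e, zero_mul])
    · exact hβ₃ (by rw [← e33, e, mul_zero])
  -- Step B : the span of {v₂, v₃, v₄} has finrank ≤ 2
  have hr : Set.range ![v₂, v₃, v₄] = ({v₂, v₃, v₄} : Set V) := by
    rw [Matrix.range_cons, Matrix.range_cons_cons_empty, Set.singleton_union]
  have hW : Module.finrank K ↥(Submodule.span K ({v₂, v₃, v₄} : Set V)) ≤ 2 := by
    have hle : Module.finrank K ↥(Submodule.span K ({v₂, v₃, v₄} : Set V)) ≤ 3 := by
      have := finrank_range_le_card (R := K) ![v₂, v₃, v₄]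
      rw [hr] at this
      simpa [Set.finrank] using this
    have hne : Module.finrank K ↥(Submodule.span K ({v₂, v₃, v₄} : Set V)) ≠ 3 := by
      intro e
      exact hdep (linearIndependent_iff_card_eq_finrank_span.mpr
        (by rw [hr]; simp [Set.finrank, e]))
    omega
  -- Step C : v₁ lies in the span of {v₂, v₃, v₄}
  have hC : v₁ ∈ Submodule.span K ({v₂, v₃, v₄} : Set V) := by
    by_contra hv
    set W := Submodule.span K ({v₂, v₃, v₄} : Set V) with hWdef
    have h0 : W.mkQ v₁ ≠ 0 := by
      simpa [Submodule.Quotient.mk_eq_zero] using hv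
    obtain ⟨g, hg⟩ : ∃ g : Module.Dual K (V ⧸ W), g (W.mkQ v₁) ≠ 0 := by
      by_contra hall
      push_neg at hall
      exact h0 ((Module.forall_dual_apply_eq_zero_iff K _).mp hall)
    set f : V →ₗ[K] K := g ∘ₗ W.mkQ with hfdef
    have hz : ∀ x ∈ W, f x = 0 := fun x hx => by
      simp [hfdef, (Submodule.Quotient.mk_eq_zero W).mpr hx]
    have e := tensor_contract h f f
    rw [hz v₂ (Submodule.subset_span (by simp)),
      hz v₃ (Submodule.subset_span (by simp)),
      hz v₄ (Submodule.subset_span (by simp))] at e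
    simp only [mul_zero, zero_mul, add_zero] at e
    exact hg (by simpa [hfdef] using mul_self_eq_zero.mp e)
  -- Conclusion
  have hins : ({v₁, v₂, v₃, v₄} : Set V) = insert v₁ ({v₂, v₃, v₄} : Set V) := rfl
  rw [hins, Submodule.span_insert_eq_span hC]
  exact hW
end

section
/- Let $g \geq 1$, let $f : \mathbb{C}^g \to \mathbb{C}$ be twice continuously $\mathbb{C}$-differentiable and even, let $x_1, \dots, x_r \in \mathbb{C}^g$ satisfy $f(x_k) = 0$ for all $k = 1, \dots, r$, and let $\beta_2, \dots, \beta_r \in \mathbb{C}$ be such that for all $z \in \mathbb{C}^g$ one has $f(z-x_1) f(z+x_1) = \sum_{k=2}^{r} \beta_k\, f(z-x_k) f(z+x_k)$. Then for all $u, v \in \mathbb{C}^g$: $(Df(x_1)(u))(Df(x_1)(v)) = \sum_{k=2}^{r} \beta_k\,(Df(x_k)(u))(Df(x_k)(v))$. -/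
private lemma line_hasDerivAt {g : ℕ} (f : (Fin g → ℂ) → ℂ) (hf : ContDiff ℂ 2 f)
    (w c : Fin g → ℂ) (t : ℂ) :
    HasDerivAt (fun s : ℂ => f (s • w + c)) (fderiv ℂ f (t • w + c) w) t := by
  have h1 : HasDerivAt (fun s : ℂ => s • w + c) w t := by
    simpa using ((hasDerivAt_id t).smul_const w).add_const c
  exact ((hf.differentiable (by norm_num)).differentiableAt.hasFDerivAt).comp_hasDerivAt t h1

private lemma line_fderiv_contDiff {g : ℕ} (f : (Fin g → ℂ) → ℂ) (hf : ContDiff ℂ 2 f)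
    (w c : Fin g → ℂ) :
    ContDiff ℂ 1 (fun t : ℂ => fderiv ℂ f (t • w + c) w) := by
  have h1 : ContDiff ℂ 1 (fun t : ℂ => t • w + c) :=
    (contDiff_id.smul contDiff_const).add contDiff_const
  exact ((hf.fderiv_right le_rfl).comp h1).clm_apply contDiff_const

private lemma fderiv_neg_even {g : ℕ} (f : (Fin g → ℂ) → ℂ) (hf : ContDiff ℂ 2 f)
    (heven : ∀ z, f (-z) = f z) (x w : Fin g → ℂ) :
    fderiv ℂ f (-x) w = - fderiv ℂ f x w := by
  have hd := hf.differentiable (by norm_num)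
  have h1 : HasFDerivAt (fun z : Fin g → ℂ => f (-z))
      ((fderiv ℂ f (-x)).comp (-(ContinuousLinearMap.id ℂ _))) x :=
    ((hd (-x)).hasFDerivAt).comp x ((-(ContinuousLinearMap.id ℂ _)).hasFDerivAt)
  have h2 : (fun z : Fin g → ℂ => f (-z)) = f := funext heven
  rw [h2] at h1
  rw [h1.fderiv]
  simp

private lemma gprime {g : ℕ} (f : (Fin g → ℂ) → ℂ) (hf : ContDiff ℂ 2 f)
    (x w : Fin g → ℂ) (t : ℂ) :
    HasDerivAt (fun s : ℂ => f (s • w - x) * f (s • w + x))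
      (fderiv ℂ f (t • w - x) w * f (t • w + x)
        + f (t • w - x) * fderiv ℂ f (t • w + x) w) t := by
  simp only [sub_eq_add_neg]
  exact (line_hasDerivAt f hf w (-x) t).mul (line_hasDerivAt f hf w x t)

private lemma gprime_diffAt {g : ℕ} (f : (Fin g → ℂ) → ℂ) (hf : ContDiff ℂ 2 f)
    (x w : Fin g → ℂ) (t : ℂ) :
    DifferentiableAt ℂ (fun s : ℂ => fderiv ℂ f (s • w - x) w * f (s • w + x)
      + f (s • w - x) * fderiv ℂ f (s • w + x) w) t := by
  simp only [sub_eq_add_neg]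
  have hDA := ((line_fderiv_contDiff f hf w (-x)).differentiable one_ne_zero) t
  have hDB := ((line_fderiv_contDiff f hf w x).differentiable one_ne_zero) t
  have hA := (line_hasDerivAt f hf w (-x) t).differentiableAt
  have hB := (line_hasDerivAt f hf w x t).differentiableAt
  exact (hDA.mul hB).add (hA.mul hDB)

private lemma gsecond {g : ℕ} (f : (Fin g → ℂ) → ℂ) (hf : ContDiff ℂ 2 f)
    (heven : ∀ z, f (-z) = f z) (x w : Fin g → ℂ) (hx : f x = 0) :
    deriv (fun s : ℂ => fderiv ℂ f (s • w - x) w * f (s • w + x)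
      + f (s • w - x) * fderiv ℂ f (s • w + x) w) 0
      = -2 * (fderiv ℂ f x w * fderiv ℂ f x w) := by
  simp only [sub_eq_add_neg]
  have hDA := ((line_fderiv_contDiff f hf w (-x)).differentiable one_ne_zero) 0
  have hDB := ((line_fderiv_contDiff f hf w x).differentiable one_ne_zero) 0
  have hA := (line_hasDerivAt f hf w (-x) 0).differentiableAt
  have hB := (line_hasDerivAt f hf w x 0).differentiableAt
  rw [deriv_fun_add (hDA.fun_mul hB) (hA.fun_mul hDB), deriv_fun_mul hDA hB, deriv_fun_mul hA hDB]
  have e0 : (0 : ℂ) • w + x = x := by simp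
  have e0' : (0 : ℂ) • w + -x = -x := by simp
  have hBval : f ((0 : ℂ) • w + x) = 0 := by rw [e0, hx]
  have hAval : f ((0 : ℂ) • w + -x) = 0 := by rw [e0']; rw [heven x, hx]
  have hBder : deriv (fun s : ℂ => f (s • w + x)) 0 = fderiv ℂ f x w := by
    rw [(line_hasDerivAt f hf w x 0).deriv, e0]
  have hAder : deriv (fun s : ℂ => f (s • w + -x)) 0 = - fderiv ℂ f x w := by
    rw [(line_hasDerivAt f hf w (-x) 0).deriv, e0']
    exact fderiv_neg_even f hf heven x w
  rw [hBval, hAval, hBder, hAder, e0, e0', fderiv_neg_even f hf heven x w]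
  ring

/-- If `f` is `C²`, even, vanishes at `x₁, …, x_r`, and the sections
`s_{x_k}(z) = f(z-x_k)·f(z+x_k)` satisfy the linear relation
`s_{x₁} = ∑_{k=2}^r βₖ s_{x_k}`, then the rank-one gradient tensors satisfy the same
relation: `Df(x₁)(u)·Df(x₁)(v) = ∑_{k=2}^r βₖ · Df(x_k)(u) · Df(x_k)(v)`. -/
theorem gradient_tensor_relation (g : ℕ) (hg : 1 ≤ g) (r : ℕ)
    (f : (Fin g → ℂ) → ℂ) (hf : ContDiff ℂ 2 f)
    (heven : ∀ z, f (-z) = f z)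
    (x₁ : Fin g → ℂ) (x : ℕ → Fin g → ℂ)
    (hx₁ : f x₁ = 0) (hx : ∀ k ∈ Finset.Icc 2 r, f (x k) = 0)
    (β : ℕ → ℂ)
    (hrel : ∀ z : Fin g → ℂ,
      f (z - x₁) * f (z + x₁) = ∑ k ∈ Finset.Icc 2 r, β k * (f (z - x k) * f (z + x k))) :
    ∀ u v : Fin g → ℂ,
      (fderiv ℂ f x₁ u) * (fderiv ℂ f x₁ v) =
        ∑ k ∈ Finset.Icc 2 r, β k * ((fderiv ℂ f (x k) u) * (fderiv ℂ f (x k) v)) := by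
  -- diagonal case
  have key : ∀ w : Fin g → ℂ,
      fderiv ℂ f x₁ w * fderiv ℂ f x₁ w =
        ∑ k ∈ Finset.Icc 2 r, β k * (fderiv ℂ f (x k) w * fderiv ℂ f (x k) w) := by
    intro w
    -- the first derivative of the left-hand section along the line t • w
    have hG1 : ∀ t : ℂ, deriv (fun s : ℂ => f (s • w - x₁) * f (s • w + x₁)) t
        = ∑ k ∈ Finset.Icc 2 r, β k *
            (fderiv ℂ f (t • w - x k) w * f (t • w + x k)
              + f (t • w - x k) * fderiv ℂ f (t • w + x k) w) := by
      intro t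
      have hfun : (fun s : ℂ => f (s • w - x₁) * f (s • w + x₁))
          = fun s : ℂ => ∑ k ∈ Finset.Icc 2 r, β k * (f (s • w - x k) * f (s • w + x k)) :=
        funext fun s => hrel (s • w)
      rw [hfun]
      have hsum : HasDerivAt
          (fun s : ℂ => ∑ k ∈ Finset.Icc 2 r, β k * (f (s • w - x k) * f (s • w + x k)))
          (∑ k ∈ Finset.Icc 2 r, β k *
            (fderiv ℂ f (t • w - x k) w * f (t • w + x k)
              + f (t • w - x k) * fderiv ℂ f (t • w + x k) w)) t :=
        HasDerivAt.fun_sum fun k _ => (gprime f hf (x k) w t).const_mul (β k)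
      exact hsum.deriv
    -- second derivatives at 0 of both sides
    have hL : deriv (deriv (fun s : ℂ => f (s • w - x₁) * f (s • w + x₁))) 0
        = -2 * (fderiv ℂ f x₁ w * fderiv ℂ f x₁ w) := by
      have : deriv (fun s : ℂ => f (s • w - x₁) * f (s • w + x₁))
          = fun t : ℂ => fderiv ℂ f (t • w - x₁) w * f (t • w + x₁)
              + f (t • w - x₁) * fderiv ℂ f (t • w + x₁) w :=
        funext fun t => (gprime f hf x₁ w t).deriv
      rw [this]
      exact gsecond f hf heven x₁ w hx₁
    have hR : deriv (deriv (fun s : ℂ => f (s • w - x₁) * f (s • w + x₁))) 0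
        = ∑ k ∈ Finset.Icc 2 r, β k * (-2 * (fderiv ℂ f (x k) w * fderiv ℂ f (x k) w)) := by
      have h1 : deriv (fun s : ℂ => f (s • w - x₁) * f (s • w + x₁))
          = fun t : ℂ => ∑ k ∈ Finset.Icc 2 r, β k *
              (fderiv ℂ f (t • w - x k) w * f (t • w + x k)
                + f (t • w - x k) * fderiv ℂ f (t • w + x k) w) := funext hG1
      rw [h1]
      rw [deriv_fun_sum (fun k _ => (gprime_diffAt f hf (x k) w 0).const_mul (β k))]
      refine Finset.sum_congr rfl fun k hk => ?_
      rw [deriv_const_mul _ (gprime_diffAt f hf (x k) w 0),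
        gsecond f hf heven (x k) w (hx k hk)]
    have heq := hL.symm.trans hR
    have h2 : (fderiv ℂ f x₁ w * fderiv ℂ f x₁ w) * (-2)
        = (∑ k ∈ Finset.Icc 2 r, β k * (fderiv ℂ f (x k) w * fderiv ℂ f (x k) w)) * (-2) := by
      rw [Finset.sum_mul]
      calc (fderiv ℂ f x₁ w * fderiv ℂ f x₁ w) * (-2)
          = -2 * (fderiv ℂ f x₁ w * fderiv ℂ f x₁ w) := by ring
        _ = _ := by
            rw [heq]
            exact Finset.sum_congr rfl fun k _ => by ring
    exact mul_right_cancel₀ (by norm_num) h2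
  -- polarization
  intro u v
  have h1 := key (u + v)
  have h2 := key (u - v)
  have hmap : ∀ y : Fin g → ℂ, fderiv ℂ f y (u + v) = fderiv ℂ f y u + fderiv ℂ f y v :=
    fun y => (fderiv ℂ f y).map_add u v
  have hmap' : ∀ y : Fin g → ℂ, fderiv ℂ f y (u - v) = fderiv ℂ f y u - fderiv ℂ f y v :=
    fun y => (fderiv ℂ f y).map_sub u v
  simp only [hmap, hmap'] at h1 h2
  have h3 := congrArg₂ (· - ·) h1 h2
  simp only [← Finset.sum_sub_distrib] at h3
  have h4 : (fderiv ℂ f x₁ u * fderiv ℂ f x₁ v) * 4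
      = (∑ k ∈ Finset.Icc 2 r, β k * (fderiv ℂ f (x k) u * fderiv ℂ f (x k) v)) * 4 := by
    rw [Finset.sum_mul]
    calc (fderiv ℂ f x₁ u * fderiv ℂ f x₁ v) * 4
        = (fderiv ℂ f x₁ u + fderiv ℂ f x₁ v) * (fderiv ℂ f x₁ u + fderiv ℂ f x₁ v)
            - (fderiv ℂ f x₁ u - fderiv ℂ f x₁ v) * (fderiv ℂ f x₁ u - fderiv ℂ f x₁ v) := by
          ring
      _ = _ := by
          rw [h3]
          exact Finset.sum_congr rfl fun k _ => by ring
  exact mul_right_cancel₀ (by norm_num) h4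
end

section
/- Let $g \geq 1$, let $f : \mathbb{C}^g \to \mathbb{C}$ be twice continuously $\mathbb{C}$-differentiable and even, let $x_1, \dots, x_r \in \mathbb{C}^g$ satisfy $f(x_k) = 0$ for $k = 2, \dots, r$, and let $\beta_2, \dots, \beta_r \in \mathbb{C}$ all be nonzero such that for all $z \in \mathbb{C}^g$ one has $f(z-x_1) f(z+x_1) = \sum_{k=2}^{r} \beta_k\, f(z-x_k) f(z+x_k)$. Then $f(x_1) = 0$, and the linear functionals $Df(x_1), Df(x_2), \dots, Df(x_r)$ span a subspace of the dual space of $\mathbb{C}^g$ of dimension at most $\lfloor r/2 \rfloor$. -/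
open Module Submodule LinearMap Filter Topology

lemma span_range_dual_le_of_isotropic {ι : Type} [Fintype ι] {g : ℕ}
    (ℓ : ι → Module.Dual ℂ (Fin g → ℂ)) (c : ι → ℂ) (hc : ∀ i, c i ≠ 0)
    (h : ∀ u v : Fin g → ℂ, ∑ i, c i * (ℓ i u * ℓ i v) = 0) :
    Module.finrank ℂ (Submodule.span ℂ (Set.range ℓ)) ≤ Fintype.card ι / 2 := by
  classical
  set Φ : (Fin g → ℂ) →ₗ[ℂ] (ι → ℂ) := LinearMap.pi ℓ with hΦ
  -- the diagonal bilinear form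
  set B : LinearMap.BilinForm ℂ (ι → ℂ) :=
    LinearMap.mk₂ ℂ (fun u v => ∑ i, c i * (u i * v i))
      (by intro u u' v
          show ∑ i, c i * ((u + u') i * v i) = (∑ i, c i * (u i * v i)) + ∑ i, c i * (u' i * v i)
          rw [← Finset.sum_add_distrib]
          exact Finset.sum_congr rfl fun i _ => by simp; ring)
      (by intro a u v
          show ∑ i, c i * ((a • u) i * v i) = a • ∑ i, c i * (u i * v i)
          rw [smul_eq_mul, Finset.mul_sum]
          exact Finset.sum_congr rfl fun i _ => by simp; ring)
      (by intro u v v'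
          show ∑ i, c i * (u i * (v + v') i) = (∑ i, c i * (u i * v i)) + ∑ i, c i * (u i * v' i)
          rw [← Finset.sum_add_distrib]
          exact Finset.sum_congr rfl fun i _ => by simp; ring)
      (by intro a u v
          show ∑ i, c i * (u i * (a • v) i) = a • ∑ i, c i * (u i * v i)
          rw [smul_eq_mul, Finset.mul_sum]
          exact Finset.sum_congr rfl fun i _ => by simp; ring) with hB
  have hBapply : ∀ u v, B u v = ∑ i, c i * (u i * v i) := fun u v => rfl
  have hsym : ∀ u v, B u v = B v u := by
    intro u v; rw [hBapply, hBapply]; exact Finset.sum_congr rfl fun i _ => by ring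
  have hrefl : B.IsRefl := fun u v huv => by rw [hsym]; exact huv
  have hnd : B.Nondegenerate := by
    refine (LinearMap.IsRefl.nondegenerate_iff_separatingLeft hrefl).mpr ?_
    intro u hu
    ext i
    have key : c i * (u i * Pi.single (M := fun _ : ι => ℂ) i 1 i) = 0 := by
      have h0 := hu (Pi.single i 1)
      rw [hBapply] at h0
      rwa [Finset.sum_eq_single_of_mem i (Finset.mem_univ i)
        (fun j _ hj => by simp [Pi.single_apply, hj])] at h0
    simp only [Pi.single_eq_same, mul_one] at key
    exact (mul_eq_zero.mp key).resolve_left (hc i)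
  have hWiso : LinearMap.range Φ ≤ B.orthogonal (LinearMap.range Φ) := by
    rintro w ⟨v, rfl⟩ w' ⟨u, rfl⟩
    show B (Φ u) (Φ v) = 0
    rw [hBapply]
    simpa [hΦ] using h u v
  have hdim : finrank ℂ (LinearMap.range Φ) ≤ Fintype.card ι / 2 := by
    have h1 : finrank ℂ (B.orthogonal (LinearMap.range Φ)) =
        finrank ℂ (ι → ℂ) - finrank ℂ (LinearMap.range Φ) :=
      LinearMap.BilinForm.finrank_orthogonal hnd _
    have h2 : finrank ℂ (LinearMap.range Φ) ≤ finrank ℂ (B.orthogonal (LinearMap.range Φ)) :=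
      Submodule.finrank_mono hWiso
    have h3 : finrank ℂ (LinearMap.range Φ) ≤ finrank ℂ (ι → ℂ) := Submodule.finrank_le _
    have h4 : finrank ℂ (ι → ℂ) = Fintype.card ι := Module.finrank_pi ℂ
    rw [Nat.le_div_iff_mul_le (by norm_num)]
    omega
  -- relate span of the ℓ i to the range of Φ via duality
  have hspan : Submodule.span ℂ (Set.range ℓ) = LinearMap.range Φ.dualMap := by
    have htop : (⊤ : Submodule ℂ (Module.Dual ℂ (ι → ℂ))) =
        Submodule.span ℂ (Set.range (LinearMap.proj : ι → Module.Dual ℂ (ι → ℂ))) := by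
      refine le_antisymm ?_ le_top
      intro φ _
      have hφ : φ = ∑ i, φ (Pi.single i 1) • (LinearMap.proj i : Module.Dual ℂ (ι → ℂ)) := by
        refine LinearMap.ext fun v => ?_
        have hv : v = ∑ i, v i • Pi.single (M := fun _ : ι => ℂ) i 1 := by
          ext j; simp [Pi.single_apply]
        conv_lhs => rw [hv]
        simp [map_sum, mul_comm]
      rw [hφ]
      exact Submodule.sum_mem _ fun i _ =>
        Submodule.smul_mem _ _ (Submodule.subset_span ⟨i, rfl⟩)
    have hcomp : (Φ.dualMap ∘ fun i => (LinearMap.proj i : Module.Dual ℂ (ι → ℂ))) = ℓ :=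
      funext fun i => rfl
    rw [LinearMap.range_eq_map, htop, Submodule.map_span, ← Set.range_comp, hcomp]
  calc finrank ℂ (Submodule.span ℂ (Set.range ℓ))
      = finrank ℂ (LinearMap.range Φ.dualMap) := by rw [hspan]
    _ = finrank ℂ (LinearMap.range Φ) := LinearMap.finrank_range_dualMap_eq_finrank_range Φ
    _ ≤ Fintype.card ι / 2 := hdim

set_option synthInstance.maxHeartbeats 1000000 in
lemma finrank_span_coe_eq {g : ℕ} (S : Set ((Fin g → ℂ) →L[ℂ] ℂ)) :
    Module.finrank ℂ (Submodule.span ℂ S) =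
    Module.finrank ℂ (Submodule.span ℂ
      ((fun φ : (Fin g → ℂ) →L[ℂ] ℂ => (φ : (Fin g → ℂ) →ₗ[ℂ] ℂ)) '' S)) := by
  letI c : ((Fin g → ℂ) →L[ℂ] ℂ) →ₗ[ℂ] ((Fin g → ℂ) →ₗ[ℂ] ℂ) :=
    { toFun := fun φ => ↑φ, map_add' := fun φ ψ => rfl, map_smul' := fun a φ => rfl }
  have hinj : Function.Injective c := ContinuousLinearMap.coe_injective
  have himg : (fun φ : (Fin g → ℂ) →L[ℂ] ℂ => (φ : (Fin g → ℂ) →ₗ[ℂ] ℂ)) '' S = ⇑c '' S := rfl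
  rw [himg, ← Submodule.map_span]
  exact (Submodule.equivMapOfInjective c hinj (Submodule.span ℂ S)).finrank_eq

/-- Analytic content of Proposition 2.1: if `f` is `C²`, even, vanishes at `x₂, …, x_r`,
the `βₖ` are nonzero, and the sections `s_{x_k}(z) = f(z-x_k)·f(z+x_k)` satisfy
`s_{x₁} = ∑_{k=2}^r βₖ s_{x_k}`, then `f x₁ = 0` and the differentials
`Df(x₁), Df(x₂), …, Df(x_r)` span a subspace of the dual of `ℂ^g` of dimension at
most `⌊r/2⌋`. -/
theorem gauss_images_span_le (g : ℕ) (hg : 1 ≤ g) (r : ℕ)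
    (f : (Fin g → ℂ) → ℂ) (hf : ContDiff ℂ 2 f)
    (heven : ∀ z, f (-z) = f z)
    (x₁ : Fin g → ℂ) (x : ℕ → Fin g → ℂ)
    (hx : ∀ k ∈ Finset.Icc 2 r, f (x k) = 0)
    (β : ℕ → ℂ) (hβ : ∀ k ∈ Finset.Icc 2 r, β k ≠ 0)
    (hrel : ∀ z : Fin g → ℂ,
      f (z - x₁) * f (z + x₁) = ∑ k ∈ Finset.Icc 2 r, β k * (f (z - x k) * f (z + x k))) :
    f x₁ = 0 ∧
      Module.finrank ℂ
        ↥(Submodule.span ℂ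
          (insert (fderiv ℂ f x₁)
            ((fun k => fderiv ℂ f (x k)) '' ↑(Finset.Icc 2 r)))) ≤ r / 2 := by
  classical
  have hdiff : Differentiable ℂ f := hf.differentiable (by norm_num)
  -- f x₁ = 0
  have hf1 : f x₁ = 0 := by
    have h0 := hrel 0
    simp only [zero_sub, zero_add, heven] at h0
    rw [Finset.sum_eq_zero (fun k hk => by rw [hx k hk, mul_zero, mul_zero])] at h0
    exact mul_self_eq_zero.mp h0
  refine ⟨hf1, ?_⟩
  -- derivative of f at -p
  have hDneg : ∀ p : Fin g → ℂ, fderiv ℂ f (-p) = -fderiv ℂ f p := by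
    intro p
    have h1 : HasFDerivAt (fun z : Fin g → ℂ => f (-z))
        ((fderiv ℂ f (-p)).comp (-(ContinuousLinearMap.id ℂ (Fin g → ℂ)))) p :=
      (hdiff (-p)).hasFDerivAt.comp p (hasFDerivAt_id p).neg
    have h2 : (fun z : Fin g → ℂ => f (-z)) = f := funext heven
    rw [h2] at h1
    have h3 : fderiv ℂ f p = (fderiv ℂ f (-p)).comp
        (-(ContinuousLinearMap.id ℂ (Fin g → ℂ))) := h1.fderiv
    ext v
    have := congrArg (fun (L : (Fin g → ℂ) →L[ℂ] ℂ) => L (-v)) h3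
    simp only [ContinuousLinearMap.comp_apply, ContinuousLinearMap.neg_apply,
      ContinuousLinearMap.id_apply, neg_neg] at this
    simp only [ContinuousLinearMap.neg_apply]
    rw [← this, map_neg]
  -- key limit
  have hlim : ∀ (h : Fin g → ℂ) (p : Fin g → ℂ), f p = 0 →
      Tendsto (fun t : ℂ => f (t • h - p) * f (t • h + p) / t ^ 2) (𝓝[≠] (0 : ℂ))
        (𝓝 (-(fderiv ℂ f p h) ^ 2)) := by
    intro h p hp
    have hp' : f (-p) = 0 := by rw [heven]; exact hp
    have hcA : HasDerivAt (fun t : ℂ => t • h - p) h 0 := by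
      simpa using ((hasDerivAt_id (0 : ℂ)).smul_const h).sub_const p
    have hcB : HasDerivAt (fun t : ℂ => t • h + p) h 0 := by
      simpa using ((hasDerivAt_id (0 : ℂ)).smul_const h).add_const p
    have hA : HasDerivAt (fun t : ℂ => f (t • h - p)) (fderiv ℂ f (-p) h) 0 := by
      have hfd : HasFDerivAt f (fderiv ℂ f (-p)) ((fun t : ℂ => t • h - p) 0) := by
        simpa using (hdiff (-p)).hasFDerivAt
      exact hfd.comp_hasDerivAt 0 hcA
    have hB : HasDerivAt (fun t : ℂ => f (t • h + p)) (fderiv ℂ f p h) 0 := by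
      have hfd : HasFDerivAt f (fderiv ℂ f p) ((fun t : ℂ => t • h + p) 0) := by
        simpa using (hdiff p).hasFDerivAt
      exact hfd.comp_hasDerivAt 0 hcB
    have tA : Tendsto (fun t : ℂ => f (t • h - p) / t) (𝓝[≠] (0 : ℂ))
        (𝓝 (fderiv ℂ f (-p) h)) := by
      have := hasDerivAt_iff_tendsto_slope.mp hA
      refine this.congr fun t => ?_
      rw [slope_def_field]
      simp [hp']
    have tB : Tendsto (fun t : ℂ => f (t • h + p) / t) (𝓝[≠] (0 : ℂ))
        (𝓝 (fderiv ℂ f p h)) := by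
      have := hasDerivAt_iff_tendsto_slope.mp hB
      refine this.congr fun t => ?_
      rw [slope_def_field]
      simp [hp]
    have := tA.mul tB
    rw [hDneg p] at this
    simp only [ContinuousLinearMap.neg_apply, neg_mul, ← sq] at this
    refine this.congr fun t => ?_
    rw [div_mul_div_comm, ← sq]
  -- key algebraic identity on differentials
  have hkey : ∀ h : Fin g → ℂ, (fderiv ℂ f x₁ h) ^ 2 =
      ∑ k ∈ Finset.Icc 2 r, β k * (fderiv ℂ f (x k) h) ^ 2 := by
    intro h
    have hL := hlim h x₁ hf1
    have hR : Tendsto (fun t : ℂ => ∑ k ∈ Finset.Icc 2 r,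
        β k * (f (t • h - x k) * f (t • h + x k) / t ^ 2)) (𝓝[≠] (0 : ℂ))
        (𝓝 (∑ k ∈ Finset.Icc 2 r, β k * (-(fderiv ℂ f (x k) h) ^ 2))) :=
      tendsto_finset_sum _ fun k hk => (hlim h (x k) (hx k hk)).const_mul (β k)
    have heq : (fun t : ℂ => f (t • h - x₁) * f (t • h + x₁) / t ^ 2) =
        fun t : ℂ => ∑ k ∈ Finset.Icc 2 r,
          β k * (f (t • h - x k) * f (t • h + x k) / t ^ 2) := by
      funext t
      rw [hrel (t • h), Finset.sum_div]
      exact Finset.sum_congr rfl fun k _ => (mul_div_assoc _ _ _)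
    rw [heq] at hL
    have huniq := tendsto_nhds_unique hL hR
    have : -(fderiv ℂ f x₁ h) ^ 2 =
        -∑ k ∈ Finset.Icc 2 r, β k * (fderiv ℂ f (x k) h) ^ 2 := by
      rw [huniq, ← Finset.sum_neg_distrib]
      exact Finset.sum_congr rfl fun k _ => by ring
    exact neg_inj.mp this
  rcases Nat.eq_zero_or_pos r with hr | hr
  · -- r = 0 : the differential at x₁ vanishes
    subst hr
    have hD0 : fderiv ℂ f x₁ = 0 := by
      ext v
      have hv := hkey v
      rw [show Finset.Icc 2 0 = (∅ : Finset ℕ) from rfl, Finset.sum_empty] at hv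
      have := pow_eq_zero_iff (n := 2) (by norm_num) |>.mp hv
      simpa using this
    have hset : (insert (fderiv ℂ f x₁)
        ((fun k => fderiv ℂ f (x k)) '' ↑(Finset.Icc 2 0)) : Set ((Fin g → ℂ) →L[ℂ] ℂ))
        = {0} := by
      rw [hD0]
      simp
    rw [hset, Submodule.span_zero_singleton]
    simp
  · -- r ≥ 1
    set L : ℕ → Module.Dual ℂ (Fin g → ℂ) := fun k =>
      if k = 1 then (fderiv ℂ f x₁ : (Fin g → ℂ) →ₗ[ℂ] ℂ)
      else (fderiv ℂ f (x k) : (Fin g → ℂ) →ₗ[ℂ] ℂ) with hL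
    set C : ℕ → ℂ := fun k => if k = 1 then 1 else -β k with hC
    have hicc : Finset.Icc 1 r = insert 1 (Finset.Icc 2 r) := by
      ext k
      simp only [Finset.mem_Icc, Finset.mem_insert]
      omega
    have h1not : (1 : ℕ) ∉ Finset.Icc 2 r := by simp
    have hsq : ∀ u : Fin g → ℂ,
        ∑ i : (Finset.Icc 1 r : Finset ℕ), C i * (L i u * L i u) = 0 := by
      intro u
      rw [Finset.sum_coe_sort (Finset.Icc 1 r) (fun k => C k * (L k u * L k u)),
        hicc, Finset.sum_insert h1not]
      have e2 : ∀ k ∈ Finset.Icc 2 r, C k * (L k u * L k u)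
          = -(β k * (fderiv ℂ f (x k) u) ^ 2) := by
        intro k hk
        have hk1 : k ≠ 1 := by
          have := (Finset.mem_Icc.mp hk).1; omega
        simp only [hC, hL, if_neg hk1, ContinuousLinearMap.coe_coe]
        ring
      rw [Finset.sum_congr rfl e2, Finset.sum_neg_distrib]
      have e1 : C 1 * (L 1 u * L 1 u) = (fderiv ℂ f x₁ u) ^ 2 := by
        simp only [hC, hL, if_pos rfl, ContinuousLinearMap.coe_coe]
        ring
      rw [e1, hkey u]
      ring
    have hbil : ∀ u v : Fin g → ℂ,
        ∑ i : (Finset.Icc 1 r : Finset ℕ), C i * (L i u * L i v) = 0 := by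
      intro u v
      have h2 : ∑ i : (Finset.Icc 1 r : Finset ℕ), 2 * (C i * (L i u * L i v)) = 0 := by
        have e := hsq (u + v)
        have eu := hsq u
        have ev := hsq v
        calc ∑ i : (Finset.Icc 1 r : Finset ℕ), 2 * (C i * (L i u * L i v))
            = ∑ i : (Finset.Icc 1 r : Finset ℕ),
                (C i * (L i (u + v) * L i (u + v)) - C i * (L i u * L i u)
                  - C i * (L i v * L i v)) := by
              refine Finset.sum_congr rfl fun i _ => ?_
              simp only [map_add]
              ring
          _ = 0 := by
              rw [Finset.sum_sub_distrib, Finset.sum_sub_distrib, e, eu, ev]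
              ring
      rw [← Finset.mul_sum] at h2
      exact (mul_eq_zero.mp h2).resolve_left two_ne_zero
    have hc : ∀ i : (Finset.Icc 1 r : Finset ℕ), C i ≠ 0 := by
      rintro ⟨k, hk⟩
      by_cases hk1 : k = 1
      · simp [hC, hk1]
      · have hk2 : k ∈ Finset.Icc 2 r := by
          simp only [Finset.mem_Icc] at hk ⊢
          omega
        simp only [hC, if_neg hk1, ne_eq, neg_eq_zero]
        exact hβ k hk2
    have hmain := span_range_dual_le_of_isotropic
      (fun i : (Finset.Icc 1 r : Finset ℕ) => L i) (fun i => C i) hc hbil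
    have hcard : Fintype.card (Finset.Icc 1 r : Finset ℕ) = r := by
      rw [Fintype.card_coe, Nat.card_Icc]
      omega
    have hrange : Set.range (fun i : (Finset.Icc 1 r : Finset ℕ) => L i) =
        (fun φ : (Fin g → ℂ) →L[ℂ] ℂ => (φ : (Fin g → ℂ) →ₗ[ℂ] ℂ)) ''
          (insert (fderiv ℂ f x₁) ((fun k => fderiv ℂ f (x k)) '' ↑(Finset.Icc 2 r))) := by
      have h1 : Set.range (fun i : (Finset.Icc 1 r : Finset ℕ) => L i)
          = L '' ↑(Finset.Icc 1 r) := by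
        ext φ
        constructor
        · rintro ⟨⟨k, hk⟩, rfl⟩
          exact ⟨k, Finset.mem_coe.mpr hk, rfl⟩
        · rintro ⟨k, hk, rfl⟩
          exact ⟨⟨k, Finset.mem_coe.mp hk⟩, rfl⟩
      have hL1 : L 1 = (fderiv ℂ f x₁ : (Fin g → ℂ) →ₗ[ℂ] ℂ) := by simp [hL]
      have hLs : L '' ↑(Finset.Icc 2 r) =
          (fun k => ((fderiv ℂ f (x k) : (Fin g → ℂ) →L[ℂ] ℂ) :
            (Fin g → ℂ) →ₗ[ℂ] ℂ)) '' ↑(Finset.Icc 2 r) := by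
        refine Set.image_congr fun k hk => ?_
        have hk1 : k ≠ 1 := by
          simp only [Finset.coe_Icc, Set.mem_Icc] at hk
          omega
        simp [hL, hk1]
      rw [h1, hicc, Finset.coe_insert, Set.image_insert_eq, Set.image_insert_eq,
        Set.image_image, hL1, hLs]
    rw [finrank_span_coe_eq, ← hrange]
    exact le_of_le_of_eq hmain (by rw [hcard])
end

section
/- Let $g \geq 1$, let $f : \mathbb{C}^g \to \mathbb{C}$ be twice continuously $\mathbb{C}$-differentiable and even, let $x_1, \dots, x_r \in \mathbb{C}^g$ satisfy $f(x_k) = 0$ and $Df(x_k) = 0$ for all $k = 2, \dots, r$, and let $\beta_2, \dots, \beta_r \in \mathbb{C}$ be such that for all $z \in \mathbb{C}^g$ one has $f(z-x_1) f(z+x_1) = \sum_{k=2}^{r} \beta_k\, f(z-x_k) f(z+x_k)$. Then $f(x_1) = 0$ and $Df(x_1) = 0$. -/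
open Finset

private lemma auxHasDerivAt {g : ℕ} (f : (Fin g → ℂ) → ℂ) (hf : Differentiable ℂ f)
    (u c : Fin g → ℂ) (t : ℂ) :
    HasDerivAt (fun s : ℂ => f (s • u + c)) (fderiv ℂ f (t • u + c) u) t := by
  have h1 : HasDerivAt (fun s : ℂ => s • u + c) u t := by
    simpa using ((hasDerivAt_id t).smul_const u).add_const c
  exact ((hf (t • u + c)).hasFDerivAt).comp_hasDerivAt t h1

private lemma auxDeriv {g : ℕ} (f : (Fin g → ℂ) → ℂ) (hf : Differentiable ℂ f)
    (u c : Fin g → ℂ) :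
    deriv (fun s : ℂ => f (s • u + c)) = fun t => fderiv ℂ f (t • u + c) u := by
  funext t; exact (auxHasDerivAt f hf u c t).deriv

private lemma auxContDiff {g : ℕ} (f : (Fin g → ℂ) → ℂ) (hf : ContDiff ℂ 2 f)
    (u c : Fin g → ℂ) : ContDiff ℂ 2 (fun s : ℂ => f (s • u + c)) :=
  hf.comp ((contDiff_id.smul contDiff_const).add contDiff_const)

private lemma derivDiff (F : ℂ → ℂ) (hF : ContDiff ℂ 2 F) :
    Differentiable ℂ (deriv F) := by
  have h2 : (2 : WithTop ℕ∞) = 1 + 1 := by norm_num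
  rw [h2] at hF
  exact (contDiff_succ_iff_deriv.mp hF).2.2.differentiable (by norm_num)

private lemma deriv2_mul (P Q : ℂ → ℂ) (hP : Differentiable ℂ P) (hQ : Differentiable ℂ Q)
    (hP' : DifferentiableAt ℂ (deriv P) 0) (hQ' : DifferentiableAt ℂ (deriv Q) 0)
    (hP0 : P 0 = 0) (hQ0 : Q 0 = 0) :
    deriv (deriv (fun t => P t * Q t)) 0 = 2 * (deriv P 0 * deriv Q 0) := by
  have h1 : deriv (fun t => P t * Q t) = fun t => deriv P t * Q t + P t * deriv Q t := by
    funext t; exact deriv_mul (hP t) (hQ t)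
  rw [h1, deriv_fun_add (f := fun t => deriv P t * Q t) (g := fun t => P t * deriv Q t) (hP'.mul (hQ 0)) ((hP 0).mul hQ'),
    deriv_fun_mul hP' (hQ 0), deriv_fun_mul (hP 0) hQ', hP0, hQ0]
  ring

/-- If `f` is `C²`, even, and `x₂, …, x_r` are "singular" zeros of `f` (both `f` and its
differential vanish there), and the sections `s_{x_k}(z) = f(z-x_k)·f(z+x_k)` satisfy
`s_{x₁} = ∑_{k=2}^r βₖ s_{x_k}`, then `x₁` is also a singular zero of `f`. -/
theorem singular_point_propagates (g : ℕ) (hg : 1 ≤ g) (r : ℕ)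
    (f : (Fin g → ℂ) → ℂ) (hf : ContDiff ℂ 2 f)
    (heven : ∀ z, f (-z) = f z)
    (x₁ : Fin g → ℂ) (x : ℕ → Fin g → ℂ)
    (hx : ∀ k ∈ Finset.Icc 2 r, f (x k) = 0)
    (hdx : ∀ k ∈ Finset.Icc 2 r, fderiv ℂ f (x k) = 0)
    (β : ℕ → ℂ)
    (hrel : ∀ z : Fin g → ℂ,
      f (z - x₁) * f (z + x₁) = ∑ k ∈ Finset.Icc 2 r, β k * (f (z - x k) * f (z + x k))) :
    f x₁ = 0 ∧ fderiv ℂ f x₁ = 0 := by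
  have hfd : Differentiable ℂ f := hf.differentiable (by norm_num)
  -- evenness consequences
  have hfneg : ∀ y, f (-y) = f y := heven
  have hdneg : ∀ y, fderiv ℂ f (-y) = -fderiv ℂ f y := by
    intro y
    have hcomp : HasFDerivAt (fun z => f (-z))
        ((fderiv ℂ f (-y)).comp (-(ContinuousLinearMap.id ℂ (Fin g → ℂ)))) y :=
      (hfd (-y)).hasFDerivAt.comp y ((hasFDerivAt_id y).neg)
    have heq : (fun z : Fin g → ℂ => f (-z)) = f := funext heven
    rw [heq] at hcomp
    have h2 : fderiv ℂ f y = (fderiv ℂ f (-y)).comp (-(ContinuousLinearMap.id ℂ (Fin g → ℂ))) :=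
      hcomp.fderiv
    apply ContinuousLinearMap.ext
    intro v
    have := congrArg (fun L : (Fin g → ℂ) →L[ℂ] ℂ => L v) h2
    simp only [ContinuousLinearMap.comp_apply, ContinuousLinearMap.neg_apply,
      ContinuousLinearMap.id_apply] at this ⊢
    rw [this]; simp [map_neg]
  -- f x₁ = 0 from the relation at z = 0
  have hval : f x₁ = 0 := by
    have h0 := hrel 0
    simp only [zero_sub, zero_add] at h0
    rw [hfneg x₁] at h0
    have : ∑ k ∈ Finset.Icc 2 r, β k * (f (-x k) * f (x k)) = 0 := by
      apply Finset.sum_eq_zero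
      intro k hk
      rw [hx k hk]; ring
    rw [this] at h0
    exact mul_self_eq_zero.mp h0
  refine ⟨hval, ?_⟩
  -- gradient
  apply ContinuousLinearMap.ext
  intro u
  simp only [ContinuousLinearMap.zero_apply]
  -- sections along the line t ↦ t • u
  set P : ℂ → ℂ := fun t => f (t • u + (-x₁)) with hPdef
  set Q : ℂ → ℂ := fun t => f (t • u + x₁) with hQdef
  have hsub : ∀ (c : Fin g → ℂ) (t : ℂ), t • u - c = t • u + (-c) := fun c t => sub_eq_add_neg _ _
  have hLHS : (fun t : ℂ => P t * Q t)
      = fun t : ℂ => ∑ k ∈ Finset.Icc 2 r, β k * (f (t • u + (-x k)) * f (t • u + x k)) := by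
    funext t
    have := hrel (t • u)
    simpa only [hsub] using this
  -- second derivative of each side at 0
  have key : deriv (deriv (fun t : ℂ => P t * Q t)) 0
      = 2 * ((-(fderiv ℂ f x₁ u)) * fderiv ℂ f x₁ u) := by
    have hP : Differentiable ℂ P := (auxContDiff f hf u (-x₁)).differentiable (by norm_num)
    have hQ : Differentiable ℂ Q := (auxContDiff f hf u x₁).differentiable (by norm_num)
    have hP' := (derivDiff P (auxContDiff f hf u (-x₁))) 0
    have hQ' := (derivDiff Q (auxContDiff f hf u x₁)) 0
    have hP0 : P 0 = 0 := by simp only [hPdef, zero_smul, zero_add]; rw [hfneg x₁]; exact hval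
    have hQ0 : Q 0 = 0 := by simp only [hQdef, zero_smul, zero_add]; exact hval
    rw [deriv2_mul P Q hP hQ hP' hQ' hP0 hQ0, hPdef, hQdef,
      auxDeriv f hfd u (-x₁), auxDeriv f hfd u x₁]
    simp only [zero_smul, zero_add, hdneg x₁, ContinuousLinearMap.neg_apply]
  have keyR : deriv (deriv (fun t : ℂ =>
      ∑ k ∈ Finset.Icc 2 r, β k * (f (t • u + (-x k)) * f (t • u + x k)))) 0 = 0 := by
    set T : ℕ → ℂ → ℂ := fun k t => β k * (f (t • u + (-x k)) * f (t • u + x k)) with hTdef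
    have hTc : ∀ k, ContDiff ℂ 2 (T k) := fun k =>
      contDiff_const.mul ((auxContDiff f hf u (-x k)).mul (auxContDiff f hf u (x k)))
    have hTd : ∀ k, Differentiable ℂ (T k) := fun k => (hTc k).differentiable (by norm_num)
    have h1 : deriv (fun t : ℂ => ∑ k ∈ Finset.Icc 2 r, T k t)
        = fun t => ∑ k ∈ Finset.Icc 2 r, deriv (T k) t := by
      funext t; exact deriv_fun_sum (fun k _ => (hTd k t))
    rw [h1, deriv_fun_sum (fun k _ => (derivDiff (T k) (hTc k)) 0)]
    apply Finset.sum_eq_zero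
    intro k hk
    have hPk : Differentiable ℂ (fun t : ℂ => f (t • u + (-x k))) :=
      (auxContDiff f hf u (-x k)).differentiable (by norm_num)
    have hQk : Differentiable ℂ (fun t : ℂ => f (t • u + x k)) :=
      (auxContDiff f hf u (x k)).differentiable (by norm_num)
    have hmul : deriv (T k) = fun t => β k * deriv (fun t : ℂ =>
        f (t • u + (-x k)) * f (t • u + x k)) t := by
      funext t
      exact deriv_const_mul (β k) ((hPk t).mul (hQk t))
    rw [hmul, deriv_const_mul _ ((derivDiff _
      ((auxContDiff f hf u (-x k)).mul (auxContDiff f hf u (x k)))) 0)]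
    have h2 : deriv (deriv (fun t : ℂ => f (t • u + (-x k)) * f (t • u + x k))) 0 = 0 := by
      rw [deriv2_mul _ _ hPk hQk
        ((derivDiff _ (auxContDiff f hf u (-x k))) 0)
        ((derivDiff _ (auxContDiff f hf u (x k))) 0)
        (by simp only [zero_smul, zero_add]; rw [hfneg (x k)]; exact hx k hk)
        (by simp only [zero_smul, zero_add]; exact hx k hk),
        auxDeriv f hfd u (-x k)]
      simp [hdneg (x k), hdx k hk]
    rw [h2]; ring
  rw [hLHS, keyR] at key
  have : fderiv ℂ f x₁ u * fderiv ℂ f x₁ u = 0 := by linear_combination key / 2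
  exact mul_self_eq_zero.mp this
end

section
/- Let $g \geq 1$, let $f : \mathbb{C}^g \to \mathbb{C}$ be three times continuously $\mathbb{C}$-differentiable and even, let $x_1, x_2 \in \mathbb{C}^g$ satisfy $f(x_1) = f(x_2) = 0$, and suppose there exists $\gamma \in \mathbb{C}$ with $Df(x_1) = \gamma\, Df(x_2)$ as linear functionals on $\mathbb{C}^g$. Define $h : \mathbb{C}^g \to \mathbb{C}$ by $h(z) = f(z-x_1) f(z+x_1) - \gamma^2\, f(z-x_2) f(z+x_2)$. Then $h$ vanishes to order at least $4$ at the origin: $h(0) = 0$ and the $k$-th (iterated Fréchet) derivative of $h$ at $0$ is zero for $k = 1, 2, 3$. -/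
private lemma hasFDerivAt_comp_add' {E F : Type*} [NormedAddCommGroup E] [NormedSpace ℂ E]
    [NormedAddCommGroup F] [NormedSpace ℂ F] (u : E → F) (hu : Differentiable ℂ u)
    (a z : E) : HasFDerivAt (fun w => u (w + a)) (fderiv ℂ u (z + a)) z := by
  simpa [Function.comp_def] using (hu (z + a)).hasFDerivAt.comp z ((hasFDerivAt_id z).add_const a)

private lemma hasFDerivAt_comp_sub' {E F : Type*} [NormedAddCommGroup E] [NormedSpace ℂ E]
    [NormedAddCommGroup F] [NormedSpace ℂ F] (u : E → F) (hu : Differentiable ℂ u)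
    (a z : E) : HasFDerivAt (fun w => u (w - a)) (fderiv ℂ u (z - a)) z := by
  simpa [Function.comp_def] using (hu (z - a)).hasFDerivAt.comp z ((hasFDerivAt_id z).sub_const a)

/-- Analytic content of the Lemma in Section 6: if `f` is `C³`, even, `f x₁ = f x₂ = 0`
and `Df(x₁) = γ • Df(x₂)`, then
`h(z) = f(z-x₁)f(z+x₁) - γ² · f(z-x₂)f(z+x₂)` vanishes to order at least 4 at the
origin. -/
theorem section_combination_vanishes_to_order_four (g : ℕ) (hg : 1 ≤ g)
    (f : (Fin g → ℂ) → ℂ) (hf : ContDiff ℂ 3 f)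
    (heven : ∀ z, f (-z) = f z)
    (x₁ x₂ : Fin g → ℂ) (hx₁ : f x₁ = 0) (hx₂ : f x₂ = 0)
    (γ : ℂ) (hγ : fderiv ℂ f x₁ = γ • fderiv ℂ f x₂)
    (h : (Fin g → ℂ) → ℂ)
    (hh : ∀ z, h z = f (z - x₁) * f (z + x₁) - γ ^ 2 * (f (z - x₂) * f (z + x₂))) :
    h 0 = 0 ∧ iteratedFDeriv ℂ 1 h 0 = 0 ∧ iteratedFDeriv ℂ 2 h 0 = 0 ∧
      iteratedFDeriv ℂ 3 h 0 = 0 := by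
  obtain rfl : h = fun z => f (z - x₁) * f (z + x₁) - γ ^ 2 * (f (z - x₂) * f (z + x₂)) :=
    funext hh
  set h : (Fin g → ℂ) → ℂ := fun z => f (z - x₁) * f (z + x₁) - γ ^ 2 * (f (z - x₂) * f (z + x₂)) with hhdef
  have hfd : Differentiable ℂ f := hf.differentiable (by norm_num)
  set D := fderiv ℂ f with hDdef
  have hDcd : ContDiff ℂ 2 D := hf.fderiv_right (by norm_num)
  have hDd : Differentiable ℂ D := hDcd.differentiable (by norm_num)
  -- evenness of derivative
  have hDneg : ∀ a, D (-a) = -D a := by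
    intro a
    have h2 : HasFDerivAt (fun z => f (-z))
        ((D (-a)).comp (-(ContinuousLinearMap.id ℂ (Fin g → ℂ)))) a := by
      simpa [Function.comp_def] using (hfd (-a)).hasFDerivAt.comp a (hasFDerivAt_id a).neg
    simp only [heven] at h2
    have huniq := h2.unique (hfd a).hasFDerivAt
    ext v
    have h4 := DFunLike.congr_fun huniq (-v)
    simp only [ContinuousLinearMap.comp_apply, ContinuousLinearMap.neg_apply,
      ContinuousLinearMap.id_apply, neg_neg] at h4
    simp [h4, map_neg]
    rfl
  have hnx₁ : f (-x₁) = 0 := by rw [heven]; exact hx₁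
  have hnx₂ : f (-x₂) = 0 := by rw [heven]; exact hx₂
  -- smoothness of h
  have hhc : ContDiff ℂ 3 h := by
    rw [hhdef]; fun_prop
  -- evenness of h
  have hheven : ∀ z, h (-z) = h z := by
    intro z
    have e1 : -z - x₁ = -(z + x₁) := by ring
    have e2 : -z + x₁ = -(z - x₁) := by ring
    have e3 : -z - x₂ = -(z + x₂) := by ring
    have e4 : -z + x₂ = -(z - x₂) := by ring
    simp only [hhdef, e1, e2, e3, e4, heven]
    ring
  -- odd iterated derivatives vanish by evenness
  have hodd : ∀ n : ℕ, Odd n → n ≤ 3 → iteratedFDeriv ℂ n h 0 = 0 := by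
    intro n hn hn3
    set N : (Fin g → ℂ) →L[ℂ] (Fin g → ℂ) := -(ContinuousLinearMap.id ℂ (Fin g → ℂ)) with hN
    have hcomp : h ∘ N = h := by
      funext z
      simpa [hN] using hheven z
    have key := N.iteratedFDeriv_comp_right hhc 0 (by exact_mod_cast hn3)
    rw [hcomp] at key
    have hN0 : N (0 : Fin g → ℂ) = 0 := by simp [hN]
    rw [hN0] at key
    ext m
    have := DFunLike.congr_fun key m
    rw [ContinuousMultilinearMap.compContinuousLinearMap_apply] at this
    have hNm : (fun i : Fin n => N (m i)) = fun i => (-1 : ℂ) • m i := by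
      funext i; simp [hN]
    rw [hNm, ContinuousMultilinearMap.map_smul_univ] at this
    simp only [Finset.prod_const, Finset.card_univ, Fintype.card_fin] at this
    rw [hn.neg_one_pow, neg_one_smul] at this
    have : iteratedFDeriv ℂ n h 0 m = 0 := by
      have := this
      linear_combination (this : iteratedFDeriv ℂ n h 0 m = -iteratedFDeriv ℂ n h 0 m) / 2
    simpa using this
  -- first derivative of h
  have hF : ∀ (a z : Fin g → ℂ), HasFDerivAt (fun w => f (w - a) * f (w + a))
      (f (z - a) • D (z + a) + f (z + a) • D (z - a)) z := fun a z =>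
    (hasFDerivAt_comp_sub' f hfd a z).mul (hasFDerivAt_comp_add' f hfd a z)
  have hh' : ∀ z : Fin g → ℂ, HasFDerivAt h
      ((f (z - x₁) • D (z + x₁) + f (z + x₁) • D (z - x₁)) -
        γ ^ 2 • (f (z - x₂) • D (z + x₂) + f (z + x₂) • D (z - x₂))) z := fun z =>
    (hF x₁ z).sub ((hF x₂ z).const_mul (γ ^ 2))
  have hfderiv_h : fderiv ℂ h = fun z =>
      (f (z - x₁) • D (z + x₁) + f (z + x₁) • D (z - x₁)) -
        γ ^ 2 • (f (z - x₂) • D (z + x₂) + f (z + x₂) • D (z - x₂)) :=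
    funext fun z => (hh' z).fderiv
  -- second derivative of h at 0
  have hG : ∀ a : Fin g → ℂ, HasFDerivAt (fun z : Fin g → ℂ =>
      f (z - a) • D (z + a) + f (z + a) • D (z - a))
      ((f (0 - a) • fderiv ℂ D (0 + a) + (D (0 - a)).smulRight (D (0 + a))) +
       (f (0 + a) • fderiv ℂ D (0 - a) + (D (0 + a)).smulRight (D (0 - a)))) 0 := fun a =>
    ((hasFDerivAt_comp_sub' f hfd a 0).smul (hasFDerivAt_comp_add' D hDd a 0)).add
      ((hasFDerivAt_comp_add' f hfd a 0).smul (hasFDerivAt_comp_sub' D hDd a 0))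
  have hsecond : fderiv ℂ (fderiv ℂ h) 0 = 0 := by
    rw [hfderiv_h]
    have hT := ((hG x₁).sub ((hG x₂).const_smul (γ ^ 2))).fderiv
    refine hT.trans ?_
    ext v w
    simp only [zero_sub, zero_add, hx₁, hx₂, hnx₁, hnx₂, hDneg, hγ, zero_smul, zero_add, add_zero,
      ContinuousLinearMap.sub_apply, ContinuousLinearMap.add_apply,
      ContinuousLinearMap.smul_apply, ContinuousLinearMap.smulRight_apply,
      ContinuousLinearMap.neg_apply, ContinuousLinearMap.zero_apply, smul_eq_mul]
    ring
  refine ⟨?_, hodd 1 ⟨0, by norm_num⟩ (by norm_num), ?_, hodd 3 ⟨1, by norm_num⟩ (by norm_num)⟩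
  · simp [hhdef, hx₁, hx₂, hnx₁, hnx₂]
  · ext m
    rw [iteratedFDeriv_two_apply, hsecond]
    simp
end
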